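/- Let S_F consist of the single full Ferrers diagram with k(n-k) dots embedded in a k×(n-k) box. Let X ∈ G_q(n,k) with F_X ∉ S_F, with RREF columns (X_n,...,X_1), and let ℓ (0 ≤ ℓ ≤ n-k-1) be the number of consecutive zeroes before the first one (from the right) in the identifying vector v(X). Then the number of subspaces of Type S_F lexicographically succeeding X in the extended-representation order equals ∑_{i=1}^{ℓ} (q^k - 1 - {X_i})·q^{k(n-k-i)}. -/

import Mathlib

open Finset
open scoped Classical

/-- `M` is in reduced row echelon form with pivot columns `piv`. -/
def IsRREF {Fq : Type} [Field Fq] {k n : ℕ}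
    (M : Matrix (Fin k) (Fin n) Fq) (piv : Fin k → Fin n) : Prop :=
  StrictMono piv ∧ (∀ i, M i (piv i) = 1) ∧
    (∀ i (j : Fin n), (j : ℕ) < (piv i : ℕ) → M i j = 0) ∧
    (∀ i i', i' ≠ i → M i' (piv i) = 0)

/-- The value `{X_c}` of column `c` of `N` read as a base-`q` integer (top entry most
significant), via the digit bijection `φ`. -/
noncomputable def colVal {Fq : Type} [Field Fq] [Fintype Fq] {k n : ℕ}
    (φ : Fq ≃ Fin (Fintype.card Fq)) (N : Matrix (Fin k) (Fin n) Fq) (c : Fin n) : ℕ :=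
  ∑ i : Fin k, (φ (N i c) : ℕ) * (Fintype.card Fq) ^ (k - 1 - (i : ℕ))

/-- The value of column `c` of the extended representation. -/
noncomputable def extVal {Fq : Type} [Field Fq] [Fintype Fq] {k n : ℕ}
    (φ : Fq ≃ Fin (Fintype.card Fq)) (N : Matrix (Fin k) (Fin n) Fq)
    (piv' : Fin k → Fin n) (c : Fin n) : ℕ :=
  (if ∃ i, piv' i = c then (Fintype.card Fq) ^ k else 0) + colVal φ N c

/-- The extended-representation lexicographic order: `(N,piv') < (M,piv)` iff at the
rightmost column where the extended representations differ, `(N,piv')` has the smaller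
base-`q` column value. -/
def ExtLt {Fq : Type} [Field Fq] [Fintype Fq] {k n : ℕ}
    (φ : Fq ≃ Fin (Fintype.card Fq))
    (N : Matrix (Fin k) (Fin n) Fq) (piv' : Fin k → Fin n)
    (M : Matrix (Fin k) (Fin n) Fq) (piv : Fin k → Fin n) : Prop :=
  ∃ c : Fin n, (∀ c' : Fin n, c < c' →
      (((∃ i, piv' i = c') ↔ (∃ i, piv i = c')) ∧ ∀ i, N i c' = M i c')) ∧
    extVal φ N piv' c < extVal φ M piv c

noncomputable def colValF {Fq : Type} [Field Fq] [Fintype Fq] {k : ℕ}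
    (φ : Fq ≃ Fin (Fintype.card Fq)) (v : Fin k → Fq) : ℕ :=
  ∑ i : Fin k, (φ (v i) : ℕ) * (Fintype.card Fq) ^ (k - 1 - (i : ℕ))

noncomputable def colEquiv {Fq : Type} [Field Fq] [Fintype Fq] {k : ℕ}
    (φ : Fq ≃ Fin (Fintype.card Fq)) : (Fin k → Fq) ≃ Fin (Fintype.card Fq ^ k) :=
  (Equiv.arrowCongr (Fin.revPerm) (φ)).trans finFunctionFinEquiv

lemma colEquiv_val {Fq : Type} [Field Fq] [Fintype Fq] {k : ℕ}
    (φ : Fq ≃ Fin (Fintype.card Fq)) (v : Fin k → Fq) :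
    ((colEquiv φ v : Fin _) : ℕ) = colValF φ v := by
  show ((finFunctionFinEquiv fun i => φ (v (Fin.revPerm.symm i)) : Fin _) : ℕ) = _
  rw [finFunctionFinEquiv_apply, colValF]
  refine Fintype.sum_bijective Fin.rev Fin.rev_bijective _ _ fun i => ?_
  have : v (Fin.revPerm.symm i) = v i.rev := rfl
  rw [this]
  have he : k - 1 - (i.rev : ℕ) = (i : ℕ) := by
    have h := i.isLt
    have h2 := Fin.val_rev i
    omega
  rw [he]

lemma colValF_lt {Fq : Type} [Field Fq] [Fintype Fq] {k : ℕ}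
    (φ : Fq ≃ Fin (Fintype.card Fq)) (v : Fin k → Fq) :
    colValF φ v < Fintype.card Fq ^ k := by
  rw [← colEquiv_val]; exact (colEquiv φ v).isLt

def finLtEquiv {m c : ℕ} (hc : c ≤ m) : {s : Fin m // (s : ℕ) < c} ≃ Fin c where
  toFun s := ⟨s.1, s.2⟩
  invFun j := ⟨⟨j, lt_of_lt_of_le j.isLt hc⟩, j.isLt⟩
  left_inv s := rfl
  right_inv j := rfl

lemma card_fin_gt {m t : ℕ} (ht : t < m) :
    Fintype.card {s : Fin m // t < (s : ℕ)} = m - 1 - t := by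
  have h1 : Fintype.card {s : Fin m // ¬ ((s : ℕ) < t + 1)} = m - (t + 1) := by
    rw [Fintype.card_subtype_compl, Fintype.card_congr (finLtEquiv ht), Fintype.card_fin,
      Fintype.card_fin]
  have h2 : Fintype.card {s : Fin m // t < (s : ℕ)} =
      Fintype.card {s : Fin m // ¬ ((s : ℕ) < t + 1)} := by
    apply Fintype.card_congr
    apply Equiv.subtypeEquivRight
    intro s; omega
  omega

lemma card_col_gt {Fq : Type} [Field Fq] [Fintype Fq] {k : ℕ}
    (φ : Fq ≃ Fin (Fintype.card Fq)) (t : ℕ) (ht : t < Fintype.card Fq ^ k) :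
    Fintype.card {v : Fin k → Fq // t < colValF φ v} = Fintype.card Fq ^ k - 1 - t := by
  have e : {v : Fin k → Fq // t < colValF φ v} ≃ {s : Fin (Fintype.card Fq ^ k) // t < (s : ℕ)} :=
    (colEquiv φ).subtypeEquiv fun v => by rw [colEquiv_val]
  rw [Fintype.card_congr e]
  exact card_fin_gt ht

def LeftId {Fq : Type} [Field Fq] {k n : ℕ} (N : Matrix (Fin k) (Fin n) Fq) : Prop :=
  ∀ (i : Fin k) (j : Fin n), (j : ℕ) < k →
    N i j = if (j : ℕ) = (i : ℕ) then 1 else 0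

lemma span_rows_inj {Fq : Type} [Field Fq] {k n : ℕ} (hkn : k ≤ n)
    (N N' : Matrix (Fin k) (Fin n) Fq) (hN : LeftId N) (hN' : LeftId N')
    (hs : Submodule.span Fq (Set.range fun i => N i)
        = Submodule.span Fq (Set.range fun i => N' i)) : N = N' := by
  funext r j
  have hmem : N r ∈ Submodule.span Fq (Set.range fun i => N' i) := by
    rw [← hs]; exact Submodule.subset_span ⟨r, rfl⟩
  obtain ⟨c, hc⟩ := (Submodule.mem_span_range_iff_exists_fun Fq).1 hmem
  have hcval : ∀ i : Fin k, c i = if (i : ℕ) = (r : ℕ) then 1 else 0 := by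
    intro i
    have hji : ((⟨(i : ℕ), lt_of_lt_of_le i.isLt hkn⟩ : Fin n) : ℕ) = (i : ℕ) := rfl
    have := congrFun hc ⟨(i : ℕ), lt_of_lt_of_le i.isLt hkn⟩
    rw [Finset.sum_apply] at this
    simp only [Pi.smul_apply, smul_eq_mul] at this
    rw [hN r _ (by simpa using i.isLt)] at this
    rw [Finset.sum_congr rfl (fun x _ => by
      rw [hN' x _ (by simpa using i.isLt)])] at this
    simp only [hji] at this
    rw [Finset.sum_congr rfl (fun x _ => by
      rw [mul_ite, mul_one, mul_zero])] at this
    simp only [Fin.val_eq_val] at this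
    rw [Finset.sum_ite_eq Finset.univ i c] at this
    simp only [Finset.mem_univ, if_true] at this
    rw [this]
    simp [Fin.val_eq_val]
  have := congrFun hc j
  rw [Finset.sum_apply] at this
  simp only [Pi.smul_apply, smul_eq_mul] at this
  rw [Finset.sum_congr rfl (fun x _ => by rw [hcval x, ite_mul, one_mul, zero_mul])] at this
  simp only [Fin.val_eq_val] at this
  rw [Finset.sum_ite_eq' Finset.univ r (fun x => N' x j)] at this
  simp only [Finset.mem_univ, if_true] at this
  exact this.symm

lemma colVal_lt {Fq : Type} [Field Fq] [Fintype Fq] {k n : ℕ}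
    (φ : Fq ≃ Fin (Fintype.card Fq)) (N : Matrix (Fin k) (Fin n) Fq) (c : Fin n) :
    colVal φ N c < Fintype.card Fq ^ k := colValF_lt φ (fun i => N i c)

lemma extLt_char {Fq : Type} [Field Fq] [Fintype Fq]
    {n k ℓ : ℕ} (hk0 : 0 < k) (hkn : k < n) (hℓ : ℓ ≤ n - k - 1)
    (φ : Fq ≃ Fin (Fintype.card Fq))
    (M : Matrix (Fin k) (Fin n) Fq) (piv : Fin k → Fin n)
    (hmax : ∀ i : Fin k, (piv i : ℕ) ≤ n - 1 - ℓ)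
    (hattained : ∃ i : Fin k, (piv i : ℕ) = n - 1 - ℓ)
    (N : Matrix (Fin k) (Fin n) Fq) :
    ExtLt φ M piv N (fun i => ⟨(i : ℕ), lt_trans i.isLt hkn⟩) ↔
      ∃ c : Fin n, n - ℓ ≤ (c : ℕ) ∧ (∀ c', c < c' → ∀ i, N i c' = M i c') ∧
        colVal φ M c < colVal φ N c := by
  have hnl : k + 1 ≤ n - ℓ := by omega
  have hk1 : k ≤ n - 1 - ℓ := by omega
  set ι : Fin k → Fin n := fun i => ⟨(i : ℕ), lt_trans i.isLt hkn⟩ with hι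
  have hιno : ∀ c : Fin n, n - 1 - ℓ ≤ (c : ℕ) → ¬ ∃ i, ι i = c := by
    rintro c hc ⟨i, hi⟩
    have : (i : ℕ) = (c : ℕ) := congrArg Fin.val hi
    have := i.isLt
    omega
  have hpivno : ∀ c : Fin n, n - ℓ ≤ (c : ℕ) → ¬ ∃ i, piv i = c := by
    rintro c hc ⟨i, hi⟩
    have h1 : (piv i : ℕ) = (c : ℕ) := congrArg Fin.val hi
    have h2 := hmax i
    omega
  constructor
  · rintro ⟨c, hcols, hlt⟩
    by_cases hc : n - ℓ ≤ (c : ℕ)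
    · refine ⟨c, hc, fun c' h i => ((hcols c' h).2 i).symm, ?_⟩
      rw [extVal, extVal, if_neg (hpivno c hc), if_neg (hιno c (by omega))] at hlt
      simpa using hlt
    · exfalso
      by_cases hc2 : (c : ℕ) = n - 1 - ℓ
      · have hpiv : ∃ i, piv i = c := by
          obtain ⟨i, hi⟩ := hattained
          exact ⟨i, Fin.ext (by omega)⟩
        rw [extVal, extVal, if_pos hpiv, if_neg (hιno c (by omega))] at hlt
        have := colVal_lt φ N c
        omega
      · have hcn : (n - 1 - ℓ) < n := by omega
        have hclt : c < (⟨n - 1 - ℓ, hcn⟩ : Fin n) := by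
          rw [Fin.lt_def]
          show (c : ℕ) < n - 1 - ℓ
          omega
        have := (hcols _ hclt).1
        obtain ⟨i, hi⟩ := hattained
        have hT : ∃ i', piv i' = (⟨n - 1 - ℓ, hcn⟩ : Fin n) := ⟨i, Fin.ext hi⟩
        have hF := hιno (⟨n - 1 - ℓ, hcn⟩ : Fin n) le_rfl
        exact hF (this.1 hT)
  · rintro ⟨c, hc, hcols, hlt⟩
    refine ⟨c, fun c' h => ?_, ?_⟩
    · have hc' : n - ℓ ≤ (c' : ℕ) := le_trans hc (le_of_lt h)
      exact ⟨iff_of_false (hpivno c' hc') (hιno c' (by omega)),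
        fun i => (hcols c' h i).symm⟩
    · rw [extVal, extVal, if_neg (hpivno c hc), if_neg (hιno c (by omega))]
      simpa using hlt

lemma prod_G (n k cv t q : ℕ) (hk : k ≤ cv) (hcv : cv < n) :
    (∏ j ∈ Finset.range n,
      (if j < k then 1 else if j < cv then q ^ k else if j = cv then (q ^ k - 1 - t) else 1))
    = (q ^ k - 1 - t) * q ^ (k * (cv - k)) := by
  set f : ℕ → ℕ := fun j =>
    (if j < k then 1 else if j < cv then q ^ k else if j = cv then (q ^ k - 1 - t) else 1)
    with hf
  rw [← Finset.prod_range_mul_prod_Ico f (Nat.succ_le_of_lt hcv)]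
  have h1 : ∏ j ∈ Finset.Ico (cv + 1) n, f j = 1 := by
    apply Finset.prod_eq_one
    intro j hj
    rw [Finset.mem_Ico] at hj
    simp only [hf]
    rw [if_neg (by omega), if_neg (by omega), if_neg (by omega)]
  rw [h1, mul_one, Finset.prod_range_succ]
  have h2 : f cv = q ^ k - 1 - t := by
    simp only [hf]
    rw [if_neg (by omega), if_neg (by omega)]
    simp
  rw [h2]
  rw [← Finset.prod_range_mul_prod_Ico f hk]
  have h3 : ∏ j ∈ Finset.range k, f j = 1 := by
    apply Finset.prod_eq_one
    intro j hj
    rw [Finset.mem_range] at hj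
    simp only [hf]
    rw [if_pos hj]
  have h4 : ∏ j ∈ Finset.Ico k cv, f j = q ^ (k * (cv - k)) := by
    have hh : ∀ j ∈ Finset.Ico k cv, f j = q ^ k := by
      intro j hj
      rw [Finset.mem_Ico] at hj
      simp only [hf]
      rw [if_neg (by omega), if_pos (by omega)]
    rw [Finset.prod_congr rfl hh, Finset.prod_const, Nat.card_Ico, ← pow_mul]
  rw [h3, h4, one_mul, mul_comm]

open scoped Classical in
lemma card_Ac {Fq : Type} [Field Fq] [Fintype Fq] {k n : ℕ}
    (φ : Fq ≃ Fin (Fintype.card Fq)) (M : Matrix (Fin k) (Fin n) Fq)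
    (c : Fin n) (hc : k < (c : ℕ)) :
    Fintype.card {N : Matrix (Fin k) (Fin n) Fq //
        LeftId N ∧ (∀ c', c < c' → ∀ i, N i c' = M i c') ∧ colVal φ M c < colVal φ N c}
      = (Fintype.card Fq ^ k - 1 - colVal φ M c)
        * (Fintype.card Fq) ^ (k * ((c : ℕ) - k)) := by
  classical
  set t := colVal φ M c with ht
  set s : Fin n → (Fin k → Fq) → Prop := fun j v =>
    if (j : ℕ) < k then (∀ i, v i = if (j : ℕ) = (i : ℕ) then 1 else 0)
    else if (j : ℕ) < (c : ℕ) then True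
    else if j = c then t < colValF φ v
    else (∀ i, v i = M i j) with hs
  have key : ∀ N : Matrix (Fin k) (Fin n) Fq,
      (LeftId N ∧ (∀ c', c < c' → ∀ i, N i c' = M i c') ∧ t < colVal φ N c)
        ↔ ∀ j, s j (fun i => N i j) := by
    intro N
    constructor
    · rintro ⟨h1, h2, h3⟩ j
      simp only [hs]
      by_cases hj1 : (j : ℕ) < k
      · rw [if_pos hj1]; exact fun i => h1 i j hj1
      · rw [if_neg hj1]
        by_cases hj2 : (j : ℕ) < (c : ℕ)
        · rw [if_pos hj2]; trivial
        · rw [if_neg hj2]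
          by_cases hj3 : j = c
          · rw [if_pos hj3]; subst hj3; exact h3
          · rw [if_neg hj3]
            exact h2 j (Fin.lt_def.mpr (by
              rcases Nat.lt_or_ge (c : ℕ) (j : ℕ) with h | h
              · exact h
              · exact absurd (Fin.ext (by omega : (j:ℕ) = (c:ℕ))) hj3))
    · intro h
      refine ⟨fun i j hj => ?_, fun c' hcc' i => ?_, ?_⟩
      · have := h j; simp only [hs, if_pos hj] at this; exact this i
      · have := h c'
        have hb1 : ¬ ((c' : ℕ) < k) := by
          have := Fin.lt_def.mp hcc'; omega
        have hb2 : ¬ ((c' : ℕ) < (c : ℕ)) := by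
          have := Fin.lt_def.mp hcc'; omega
        have hb3 : c' ≠ c := Fin.ne_of_gt hcc'
        simp only [hs, if_neg hb1, if_neg hb2, if_neg hb3] at this
        exact this i
      · have := h c
        simp only [hs, if_neg (by omega : ¬ ((c:ℕ) < k)), if_neg (lt_irrefl (c:ℕ)),
          if_pos rfl] at this
        exact this
  have e1 : {N : Matrix (Fin k) (Fin n) Fq //
      LeftId N ∧ (∀ c', c < c' → ∀ i, N i c' = M i c') ∧ t < colVal φ N c}
      ≃ {g : Fin n → Fin k → Fq // ∀ j, s j (g j)} :=
    (Equiv.subtypeEquiv (Equiv.piComm fun (_ : Fin k) (_ : Fin n) => Fq)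
      (fun N => key N))
  rw [Fintype.card_congr (e1.trans (Equiv.subtypePiEquivPi))]
  rw [Fintype.card_pi]
  have hcard : ∀ j : Fin n, Fintype.card {v : Fin k → Fq // s j v}
      = (if (j : ℕ) < k then 1 else if (j : ℕ) < (c : ℕ) then Fintype.card Fq ^ k
          else if (j : ℕ) = (c : ℕ) then (Fintype.card Fq ^ k - 1 - t) else 1) := by
    intro j
    by_cases hj1 : (j : ℕ) < k
    · rw [if_pos hj1]
      have : ∀ v : Fin k → Fq, s j v ↔ v = fun (i : Fin k) => if (j : ℕ) = (i : ℕ) then (1 : Fq) else 0 := by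
        intro v; simp only [hs, if_pos hj1]; exact funext_iff.symm
      rw [Fintype.card_congr (Equiv.subtypeEquivRight this)]
      exact Fintype.card_subtype_eq _
    · rw [if_neg hj1]
      by_cases hj2 : (j : ℕ) < (c : ℕ)
      · rw [if_pos hj2]
        have : ∀ v : Fin k → Fq, s j v ↔ True := by
          intro v; simp only [hs, if_neg hj1, if_pos hj2]
        rw [Fintype.card_congr (Equiv.subtypeEquivRight this)]
        rw [Fintype.card_congr (Equiv.subtypeUnivEquiv fun _ => trivial)]
        rw [Fintype.card_fun, Fintype.card_fin]
      · rw [if_neg hj2]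
        by_cases hj3 : j = c
        · rw [if_pos (congrArg Fin.val hj3)]
          have : ∀ v : Fin k → Fq, s j v ↔ t < colValF φ v := by
            intro v; simp only [hs, if_neg hj1, if_neg hj2, if_pos hj3]
          rw [Fintype.card_congr (Equiv.subtypeEquivRight this)]
          exact card_col_gt φ t (ht ▸ colVal_lt φ M c)
        · rw [if_neg (fun h => hj3 (Fin.ext h))]
          have : ∀ v : Fin k → Fq, s j v ↔ v = fun (i : Fin k) => M i j := by
            intro v; simp only [hs, if_neg hj1, if_neg hj2, if_neg hj3]
            exact funext_iff.symm
          rw [Fintype.card_congr (Equiv.subtypeEquivRight this)]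
          exact Fintype.card_subtype_eq _
  rw [Finset.prod_congr rfl (fun j _ => hcard j)]
  rw [Fin.prod_univ_eq_prod_range
    (fun m => (if m < k then 1 else if m < (c : ℕ) then Fintype.card Fq ^ k
      else if m = (c : ℕ) then (Fintype.card Fq ^ k - 1 - t) else 1)) n]
  exact prod_G n k (c : ℕ) t (Fintype.card Fq) (le_of_lt hc) c.isLt

lemma leftId_isRREF {Fq : Type} [Field Fq] {k n : ℕ} (hkn : k < n)
    (N : Matrix (Fin k) (Fin n) Fq) (h : LeftId N) :
    IsRREF N (fun i => ⟨(i : ℕ), lt_trans i.isLt hkn⟩) := by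
  refine ⟨fun a b hab => Fin.lt_def.mpr (Fin.lt_def.mp hab), fun i => ?_, fun i j hj => ?_,
    fun i i' hii' => ?_⟩
  · rw [h i _ i.isLt]; simp
  · rw [h i j (lt_trans hj i.isLt)]
    exact if_neg (by exact Nat.ne_of_lt hj)
  · rw [h i' _ i.isLt]
    exact if_neg (fun hh => hii' (Fin.ext hh.symm))

lemma colVal_congr {Fq : Type} [Field Fq] [Fintype Fq] {k n : ℕ}
    (φ : Fq ≃ Fin (Fintype.card Fq)) (N M : Matrix (Fin k) (Fin n) Fq) (c : Fin n)
    (h : ∀ i, N i c = M i c) : colVal φ N c = colVal φ M c := by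
  unfold colVal
  exact Finset.sum_congr rfl fun i _ => by rw [h i]


/-- Let `S_F` consist of the single full Ferrers diagram; a subspace is of Type `S_F`
iff its pivots are the first `k` columns (`piv' i = i`).  For `X ∈ G_q(n,k)` not of
Type `S_F`, with `ℓ` consecutive zeroes at the right end of its identifying vector
(rightmost pivot in Lean column `n - 1 - ℓ`), the number of subspaces of Type `S_F`
lexicographically succeeding `X` equals `∑_{i=1}^{ℓ} (q^k - 1 - {X_i}) q^{k(n-k-i)}`,
where paper column `i` is Lean column `n - i`. -/
theorem card_type_SF_succeeding (Fq : Type) [Field Fq] [Fintype Fq]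
    (n k ℓ : ℕ) (hk0 : 0 < k) (hkn : k < n) (hℓ : ℓ ≤ n - k - 1)
    (φ : Fq ≃ Fin (Fintype.card Fq)) (hφ0 : (φ 0 : ℕ) = 0) (hφ1 : (φ 1 : ℕ) = 1)
    (M : Matrix (Fin k) (Fin n) Fq) (piv : Fin k → Fin n) (hM : IsRREF M piv)
    (hnotfull : ¬ ∀ i : Fin k, (piv i : ℕ) = (i : ℕ))
    (hmax : ∀ i : Fin k, (piv i : ℕ) ≤ n - 1 - ℓ)
    (hattained : ∃ i : Fin k, (piv i : ℕ) = n - 1 - ℓ) :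
    Nat.card {Y : Submodule Fq (Fin n → Fq) //
        ∃ (N : Matrix (Fin k) (Fin n) Fq) (piv' : Fin k → Fin n),
          IsRREF N piv' ∧ (∀ i : Fin k, (piv' i : ℕ) = (i : ℕ)) ∧
          Submodule.span Fq (Set.range fun i => N i) = Y ∧
          ExtLt φ M piv N piv' }
      = ∑ i ∈ Finset.Icc 1 ℓ,
          ((Fintype.card Fq) ^ k - 1 -
              (if h : n - i < n then colVal φ M ⟨n - i, h⟩ else 0))
            * (Fintype.card Fq) ^ (k * (n - k - i)) := by
  classical
  clear hnotfull hφ0 hφ1 hM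
  have hstepA : Nat.card {Y : Submodule Fq (Fin n → Fq) //
        ∃ (N : Matrix (Fin k) (Fin n) Fq) (piv' : Fin k → Fin n),
          IsRREF N piv' ∧ (∀ i : Fin k, (piv' i : ℕ) = (i : ℕ)) ∧
          Submodule.span Fq (Set.range fun i => N i) = Y ∧
          ExtLt φ M piv N piv' }
      = Fintype.card {N : Matrix (Fin k) (Fin n) Fq //
          LeftId N ∧ ExtLt φ M piv N (fun i => ⟨(i : ℕ), lt_trans i.isLt hkn⟩)} := by
    rw [← Nat.card_eq_fintype_card]
    apply Nat.card_congr
    refine (Equiv.ofBijective (fun N => ⟨Submodule.span Fq (Set.range fun i => N.1 i),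
      N.1, (fun i => ⟨(i : ℕ), lt_trans i.isLt hkn⟩), leftId_isRREF hkn N.1 N.2.1,
      fun i => rfl, rfl, N.2.2⟩) ⟨?_, ?_⟩).symm
    · intro N N' hNN'
      have hspan := congrArg Subtype.val hNN'
      exact Subtype.ext (span_rows_inj (le_of_lt hkn) N.1 N'.1 N.2.1 N'.2.1 hspan)
    · rintro ⟨Y, N, piv', h1, h2, h3, h4⟩
      have hpiv' : piv' = (fun i => ⟨(i : ℕ), lt_trans i.isLt hkn⟩) :=
        funext fun i => Fin.ext (h2 i)
      have hleft : LeftId N := by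
        intro i j hj
        have hpj : piv' ⟨(j : ℕ), hj⟩ = j := Fin.ext (h2 ⟨(j : ℕ), hj⟩)
        by_cases hij : (j : ℕ) = (i : ℕ)
        · rw [if_pos hij]
          have : piv' i = j := Fin.ext (by rw [h2 i]; omega)
          rw [← this]; exact h1.2.1 i
        · rw [if_neg hij]
          rw [← hpj]
          exact h1.2.2.2 ⟨(j : ℕ), hj⟩ i (fun hh => hij (by rw [hh]))
      rw [hpiv'] at h4
      exact ⟨⟨N, hleft, h4⟩, Subtype.ext h3⟩
  rw [hstepA, Fintype.card_subtype]
  clear hstepA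
  have hQunion : (Finset.univ.filter (fun N : Matrix (Fin k) (Fin n) Fq =>
        LeftId N ∧ ExtLt φ M piv N (fun i => ⟨(i : ℕ), lt_trans i.isLt hkn⟩)))
      = (Finset.univ.filter (fun c : Fin n => n - ℓ ≤ (c : ℕ))).biUnion (fun c =>
          Finset.univ.filter (fun N : Matrix (Fin k) (Fin n) Fq =>
            LeftId N ∧ (∀ c', c < c' → ∀ i, N i c' = M i c') ∧
            colVal φ M c < colVal φ N c)) := by
    ext N
    simp only [Finset.mem_filter, Finset.mem_univ, true_and, Finset.mem_biUnion]
    constructor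
    · rintro ⟨hl, he⟩
      obtain ⟨c, hc1, hc2, hc3⟩ := (extLt_char hk0 hkn hℓ φ M piv hmax hattained N).1 he
      exact ⟨c, hc1, hl, hc2, hc3⟩
    · rintro ⟨c, hc1, hc2⟩
      exact ⟨hc2.1, (extLt_char hk0 hkn hℓ φ M piv hmax hattained N).2
        ⟨c, hc1, hc2.2.1, hc2.2.2⟩⟩
  rw [hQunion, Finset.card_biUnion]
  clear hQunion
  · have hcardA : ∀ c ∈ Finset.univ.filter (fun c : Fin n => n - ℓ ≤ (c : ℕ)),
        (Finset.univ.filter (fun N : Matrix (Fin k) (Fin n) Fq =>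
          LeftId N ∧ (∀ c', c < c' → ∀ i, N i c' = M i c') ∧
          colVal φ M c < colVal φ N c)).card
        = (Fintype.card Fq ^ k - 1 - colVal φ M c)
          * (Fintype.card Fq) ^ (k * ((c : ℕ) - k)) := by
      intro c hc
      simp only [Finset.mem_filter, Finset.mem_univ, true_and] at hc
      rw [← Fintype.card_subtype]
      exact card_Ac φ M c (by omega)
    rw [Finset.sum_congr rfl hcardA]
    clear hcardA
    refine Finset.sum_bij' (fun c _ => n - (c : ℕ))
      (fun i hi => (⟨n - i, by rw [Finset.mem_Icc] at hi; omega⟩ : Fin n))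
      ?_ ?_ ?_ ?_ ?_
    · intro c hc
      simp only [Finset.mem_filter, Finset.mem_univ, true_and] at hc
      have h9 := c.isLt
      beta_reduce
      rw [Finset.mem_Icc]
      omega
    · intro i hi
      rw [Finset.mem_Icc] at hi
      beta_reduce
      simp only [Finset.mem_filter, Finset.mem_univ, true_and]
      omega
    · intro c hc
      simp only [Finset.mem_filter, Finset.mem_univ, true_and] at hc
      have h9 := c.isLt
      beta_reduce
      refine Fin.ext ?_
      show n - (n - (c : ℕ)) = (c : ℕ)
      omega
    · intro i hi
      rw [Finset.mem_Icc] at hi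
      beta_reduce
      simp only
      omega
    · intro c hc
      simp only [Finset.mem_filter, Finset.mem_univ, true_and] at hc
      have hlt := c.isLt
      have h1 : n - (n - (c : ℕ)) < n := by omega
      have h3 : n - k - (n - (c : ℕ)) = (c : ℕ) - k := by omega
      have h2 : (⟨n - (n - (c : ℕ)), h1⟩ : Fin n) = c :=
        Fin.ext (by show n - (n - (c : ℕ)) = (c : ℕ); omega)
      beta_reduce
      rw [dif_pos h1, h2, h3]
  · intro c hcC d hdC hcd
    rw [Function.onFun, Finset.disjoint_left]
    intro N hNc hNd
    simp only [Finset.mem_filter, Finset.mem_univ, true_and] at hNc hNd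
    rcases lt_or_gt_of_ne hcd with h | h
    · have h6 := colVal_congr φ N M d (hNc.2.1 d h)
      have h7 := hNd.2.2
      rw [h6] at h7
      exact absurd h7 (lt_irrefl _)
    · have h6 := colVal_congr φ N M c (hNd.2.1 c h)
      have h7 := hNc.2.2
      rw [h6] at h7
      exact absurd h7 (lt_irrefl _)
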